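/- Let d ≥ 1 and H ∈ ℕ, let μ_src and μ_tgt be Borel probability measures on ℝ^d with finite second moments, and let γ⋆ be a coupling of μ_src and μ_tgt that attains W₂²(μ_src, μ_tgt). For h = 0,…,H, let μ⋆_h be the pushforward of γ⋆ under the map (x₀, x_{H+1}) ↦ ( x₀ + (h/(H+1))(x_{H+1} − x₀), x₀ + ((h+1)/(H+1))(x_{H+1} − x₀) ). Then (μ⋆_0,…,μ⋆_H) is feasible for the dynamic primal LP with source μ_src and target μ_tgt, its cost equals W₂²(μ_src, μ_tgt), and it is an optimal solution (its cost is ≤ the cost of every feasible family). -/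

import Mathlib

open MeasureTheory ENNReal

/-- The squared Wasserstein-2 distance. -/
noncomputable def W2sq {d : ℕ} (μ ν : Measure (EuclideanSpace ℝ (Fin d))) : ℝ≥0∞ :=
  ⨅ (γ : Measure (EuclideanSpace ℝ (Fin d) × EuclideanSpace ℝ (Fin d)))
    (_ : IsProbabilityMeasure γ ∧ γ.map Prod.fst = μ ∧ γ.map Prod.snd = ν),
      2⁻¹ * ∫⁻ p, (‖p.1 - p.2‖₊ : ℝ≥0∞) ^ 2 ∂γ

/-- Feasibility for the dynamic primal LP with horizon `H`, source `μsrc`, target `μtgt`: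
the family consists of probability measures on `ℝ^d × ℝ^d`, the first marginal of `μ 0`
is `μsrc`, consecutive flow constraints hold, and the second marginal of `μ H` is `μtgt`. -/
def LPfeasible {d : ℕ} (H : ℕ) (μsrc μtgt : Measure (EuclideanSpace ℝ (Fin d)))
    (μ : Fin (H + 1) → Measure (EuclideanSpace ℝ (Fin d) × EuclideanSpace ℝ (Fin d))) : Prop :=
  (∀ h, IsProbabilityMeasure (μ h)) ∧
  (μ 0).map Prod.fst = μsrc ∧
  (∀ h : Fin H, (μ h.castSucc).map Prod.snd = (μ h.succ).map Prod.fst) ∧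
  (μ (Fin.last H)).map Prod.snd = μtgt

/-- The cost of a family in the dynamic primal LP: `((H+1)/2) Σ_h ∫ ‖x-y‖² dμ_h`. -/
noncomputable def LPcost {d : ℕ} (H : ℕ)
    (μ : Fin (H + 1) → Measure (EuclideanSpace ℝ (Fin d) × EuclideanSpace ℝ (Fin d))) : ℝ≥0∞ :=
  ((H : ℝ≥0∞) + 1) / 2 * ∑ h, ∫⁻ p, (‖p.1 - p.2‖₊ : ℝ≥0∞) ^ 2 ∂(μ h)

section Aux

open NNReal ProbabilityTheory

lemma ennreal_two_mul_le (a b : ℝ≥0∞) : 2 * (a * b) ≤ a ^ 2 + b ^ 2 := by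
  rcases eq_or_ne a ⊤ with ha | ha
  · rcases eq_or_ne b 0 with hb | hb
    · simp [hb]
    · have : a ^ 2 = ⊤ := by simp [ha]
      simp [this]
  rcases eq_or_ne b ⊤ with hb | hb
  · rcases eq_or_ne a 0 with ha0 | ha0
    · simp [ha0]
    · have : b ^ 2 = ⊤ := by simp [hb]
      simp [this]
  lift a to NNReal using ha
  lift b to NNReal using hb
  have h : (2 : ℝ≥0) * (a * b) ≤ a ^ 2 + b ^ 2 := by
    rw [← NNReal.coe_le_coe]
    push_cast
    nlinarith [sq_nonneg ((a : ℝ) - b)]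
  calc (2 : ℝ≥0∞) * (a * b) = ((2 * (a * b) : ℝ≥0) : ℝ≥0∞) := by push_cast; ring
    _ ≤ ((a ^ 2 + b ^ 2 : ℝ≥0) : ℝ≥0∞) := by exact_mod_cast h
    _ = (a : ℝ≥0∞) ^ 2 + (b : ℝ≥0∞) ^ 2 := by push_cast; ring

lemma ennreal_sq_sum_le {ι : Type*} (s : Finset ι) (f : ι → ℝ≥0∞) :
    (∑ i ∈ s, f i) ^ 2 ≤ (s.card : ℝ≥0∞) * ∑ i ∈ s, f i ^ 2 := by
  rw [← ENNReal.mul_le_mul_iff_right (a := 2) two_ne_zero ofNat_ne_top]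
  calc 2 * (∑ i ∈ s, f i) ^ 2 = ∑ i ∈ s, ∑ j ∈ s, 2 * (f i * f j) := by
        rw [sq, Finset.sum_mul_sum]
        rw [Finset.mul_sum]
        exact Finset.sum_congr rfl fun i _ => by rw [Finset.mul_sum]
    _ ≤ ∑ i ∈ s, ∑ j ∈ s, (f i ^ 2 + f j ^ 2) := by
        gcongr with i hi j hj
        exact ennreal_two_mul_le _ _
    _ = 2 * ((s.card : ℝ≥0∞) * ∑ i ∈ s, f i ^ 2) := by
        simp only [Finset.sum_add_distrib, Finset.sum_const, nsmul_eq_mul, ← Finset.mul_sum]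
        ring

lemma glue_step {X : Type*} [MeasurableSpace X] [StandardBorelSpace X] [Nonempty X]
    (γ ρ : Measure (X × X)) [IsProbabilityMeasure γ] [IsProbabilityMeasure ρ]
    (hlink : γ.map Prod.snd = ρ.map Prod.fst) :
    ∃ m : Measure ((X × X) × X), IsProbabilityMeasure m ∧
      m.map Prod.fst = γ ∧ m.map (fun p => (p.1.2, p.2)) = ρ := by
  set κ : Kernel X X := ρ.condKernel with hκ
  set κ' : Kernel (X × X) X := κ.comap Prod.snd measurable_snd with hκ'
  have : IsMarkovKernel κ' := Kernel.IsMarkovKernel.comap _ _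
  refine ⟨γ.compProd κ', inferInstance, ?_, ?_⟩
  · exact Measure.fst_compProd γ κ'
  · have hg : Measurable fun p : (X × X) × X => (p.1.2, p.2) :=
      (measurable_snd.comp measurable_fst).prodMk measurable_snd
    have hρ : ρ.fst ⊗ₘ κ = ρ := ρ.disintegrate _
    ext s hs
    rw [Measure.map_apply hg hs, Measure.compProd_apply (hg hs)]
    have h1 : ∀ p : X × X, κ' p (Prod.mk p ⁻¹' ((fun p : (X × X) × X => (p.1.2, p.2)) ⁻¹' s))
        = κ p.2 (Prod.mk p.2 ⁻¹' s) := by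
      intro p
      rw [hκ', Kernel.comap_apply]
      rfl
    simp_rw [h1]
    have hmeas : Measurable fun y : X => κ y (Prod.mk y ⁻¹' s) :=
      Kernel.measurable_kernel_prodMk_left hs
    rw [← lintegral_map hmeas measurable_snd, hlink]
    have h2 : ρ.map Prod.fst = ρ.fst := rfl
    rw [h2, ← Measure.compProd_apply hs, hρ]

end Aux

open Fin.NatCast

/-- the linear interpolation of an optimal static coupling is an optimal
solution of the dynamic primal LP, with cost `W₂²(μsrc, μtgt)`. -/
theorem stmt1 {d : ℕ} (hd : 1 ≤ d) (H : ℕ)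
    (μsrc μtgt : Measure (EuclideanSpace ℝ (Fin d)))
    [IsProbabilityMeasure μsrc] [IsProbabilityMeasure μtgt]
    (h2src : ∫⁻ x, (‖x‖₊ : ℝ≥0∞) ^ 2 ∂μsrc ≠ ⊤)
    (h2tgt : ∫⁻ x, (‖x‖₊ : ℝ≥0∞) ^ 2 ∂μtgt ≠ ⊤)
    (γ : Measure (EuclideanSpace ℝ (Fin d) × EuclideanSpace ℝ (Fin d)))
    [IsProbabilityMeasure γ]
    (hγ1 : γ.map Prod.fst = μsrc) (hγ2 : γ.map Prod.snd = μtgt)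
    (hγopt : 2⁻¹ * ∫⁻ p, (‖p.1 - p.2‖₊ : ℝ≥0∞) ^ 2 ∂γ = W2sq μsrc μtgt)
    (μstar : Fin (H + 1) → Measure (EuclideanSpace ℝ (Fin d) × EuclideanSpace ℝ (Fin d)))
    (hμstar : ∀ h : Fin (H + 1), μstar h =
      γ.map (fun p =>
        (p.1 + ((h.val : ℝ) / ((H : ℝ) + 1)) • (p.2 - p.1),
         p.1 + (((h.val : ℝ) + 1) / ((H : ℝ) + 1)) • (p.2 - p.1)))) :
    LPfeasible H μsrc μtgt μstar ∧
    LPcost H μstar = W2sq μsrc μtgt ∧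
    ∀ ν, LPfeasible H μsrc μtgt ν → LPcost H μstar ≤ LPcost H ν := by
  classical
  set X := EuclideanSpace ℝ (Fin d)
  -- measurability of the interpolation maps
  have hT : ∀ a b : ℝ, Measurable (fun p : X × X =>
      (p.1 + a • (p.2 - p.1), p.1 + b • (p.2 - p.1))) := by
    intro a b; fun_prop
  have hint : Measurable (fun q : X × X => (‖q.1 - q.2‖₊ : ℝ≥0∞) ^ 2) := by fun_prop
  have hHR : ((H : ℝ) + 1) ≠ 0 := by positivity
  -- Feasibility
  have hfeas : LPfeasible H μsrc μtgt μstar := by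
    refine ⟨?_, ?_, ?_, ?_⟩
    · intro h
      rw [hμstar h]
      exact Measure.isProbabilityMeasure_map (hT _ _).aemeasurable
    · rw [hμstar 0, Measure.map_map measurable_fst (hT _ _)]
      have : (Prod.fst ∘ fun p : X × X =>
          (p.1 + (((0 : Fin (H+1)).val : ℝ) / ((H : ℝ) + 1)) • (p.2 - p.1),
           p.1 + ((((0 : Fin (H+1)).val : ℝ) + 1) / ((H : ℝ) + 1)) • (p.2 - p.1)))
          = Prod.fst := by
        funext p; simp
      rw [this, hγ1]
    · intro h
      rw [hμstar h.castSucc, hμstar h.succ,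
        Measure.map_map measurable_snd (hT _ _), Measure.map_map measurable_fst (hT _ _)]
      congr 1
      funext p
      simp only [Function.comp_apply, Fin.coe_castSucc, Fin.val_succ]
      push_cast
      ring_nf
    · rw [hμstar (Fin.last H), Measure.map_map measurable_snd (hT _ _)]
      have : (Prod.snd ∘ fun p : X × X =>
          (p.1 + (((Fin.last H).val : ℝ) / ((H : ℝ) + 1)) • (p.2 - p.1),
           p.1 + ((((Fin.last H).val : ℝ) + 1) / ((H : ℝ) + 1)) • (p.2 - p.1)))
          = Prod.snd := by
        funext p
        simp only [Function.comp_apply, Fin.val_last]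
        rw [div_self hHR, one_smul]
        exact add_sub_cancel _ _
      rw [this, hγ2]
  -- Cost computation
  set Iγ : ℝ≥0∞ := ∫⁻ p : X × X, (‖p.1 - p.2‖₊ : ℝ≥0∞) ^ 2 ∂γ with hIγ
  set n : ℝ≥0∞ := (H : ℝ≥0∞) + 1 with hn
  have hn0 : n ≠ 0 := by simp [hn]
  have hnt : n ≠ ⊤ := by simp [hn]
  have hterm : ∀ h : Fin (H + 1),
      ∫⁻ q : X × X, (‖q.1 - q.2‖₊ : ℝ≥0∞) ^ 2 ∂(μstar h) = (n⁻¹) ^ 2 * Iγ := by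
    intro h
    rw [hμstar h, lintegral_map hint (hT _ _)]
    have hpt : ∀ p : X × X,
        (‖(p.1 + ((h.val : ℝ) / ((H : ℝ) + 1)) • (p.2 - p.1)) -
           (p.1 + (((h.val : ℝ) + 1) / ((H : ℝ) + 1)) • (p.2 - p.1))‖₊ : ℝ≥0∞) ^ 2
        = (n⁻¹) ^ 2 * (‖p.1 - p.2‖₊ : ℝ≥0∞) ^ 2 := by
      intro p
      have hv : (p.1 + ((h.val : ℝ) / ((H : ℝ) + 1)) • (p.2 - p.1)) -
           (p.1 + (((h.val : ℝ) + 1) / ((H : ℝ) + 1)) • (p.2 - p.1))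
          = (((H : ℝ) + 1)⁻¹) • (p.1 - p.2) := by
        rw [add_sub_add_left_eq_sub, ← sub_smul, div_sub_div_same]
        have : ((h.val : ℝ) - ((h.val : ℝ) + 1)) = -1 := by ring
        rw [this, neg_div, neg_smul, ← smul_neg, neg_sub]
        congr 1
        field_simp
      rw [hv, nnnorm_smul, ENNReal.coe_mul, mul_pow]
      congr 2
      have hpos : (0:ℝ) ≤ ((H : ℝ) + 1)⁻¹ := by positivity
      rw [← enorm_eq_nnnorm, Real.enorm_eq_ofReal hpos, ENNReal.ofReal_inv_of_pos (by positivity)]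
      congr 1
      rw [hn]
      push_cast
      rw [ENNReal.ofReal_add (by positivity) zero_le_one]
      simp [ENNReal.ofReal_natCast]
    simp_rw [hpt]
    rw [lintegral_const_mul _ hint]
  have hcost : LPcost H μstar = W2sq μsrc μtgt := by
    rw [LPcost]
    rw [Finset.sum_congr rfl fun h _ => hterm h]
    rw [Finset.sum_const, Finset.card_univ, Fintype.card_fin, nsmul_eq_mul]
    have hHn : ((H : ℝ≥0∞) + 1) = n := rfl
    rw [hHn]
    have hcast : ((H + 1 : ℕ) : ℝ≥0∞) = n := by rw [hn]; push_cast; ring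
    rw [hcast, ← hγopt]
    calc n / 2 * (n * ((n⁻¹) ^ 2 * Iγ)) = (n * n⁻¹) * (n * n⁻¹) * (2⁻¹ * Iγ) := by
          rw [div_eq_mul_inv, sq]; ring
      _ = 2⁻¹ * Iγ := by rw [ENNReal.mul_inv_cancel hn0 hnt]; ring
  refine ⟨hfeas, hcost, ?_⟩
  -- Optimality
  intro ν hν
  obtain ⟨hνp, hνsrc, hνflow, hνtgt⟩ := hν
  have h2 : ∀ x : ℝ≥0∞, x ^ (2 : ℕ) = x ^ (2 : ℝ) := fun x => by
    rw [← ENNReal.rpow_natCast]; norm_num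
  set J : ℕ → ℝ≥0∞ := fun h =>
    (∫⁻ p : X × X, (‖p.1 - p.2‖₊ : ℝ≥0∞) ^ 2 ∂(ν (h : Fin (H + 1)))) ^ (1/2 : ℝ) with hJ
  have key : ∀ k : ℕ, k ≤ H → ∃ γ' : Measure (X × X), IsProbabilityMeasure γ' ∧
      γ'.map Prod.fst = μsrc ∧ γ'.map Prod.snd = (ν (k : Fin (H + 1))).map Prod.snd ∧
      (∫⁻ p : X × X, (‖p.1 - p.2‖₊ : ℝ≥0∞) ^ 2 ∂γ') ^ (1/2 : ℝ) ≤
        ∑ h ∈ Finset.range (k + 1), J h := by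
    intro k
    induction k with
    | zero =>
      intro _
      refine ⟨ν 0, hνp 0, hνsrc, rfl, ?_⟩
      rw [Finset.sum_range_one, hJ]
      norm_num
    | succ k ih =>
      intro hk
      obtain ⟨γ', hp, hfst, hsnd, hcost'⟩ := ih (by omega)
      haveI := hp
      haveI := hνp (((k+1 : ℕ)) : Fin (H + 1))
      have hlink : γ'.map Prod.snd = (ν (((k+1 : ℕ)) : Fin (H + 1))).map Prod.fst := by
        rw [hsnd]
        have hc : ((⟨k, by omega⟩ : Fin H)).castSucc = ((k : ℕ) : Fin (H + 1)) := by
          apply Fin.ext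
          rw [Fin.coe_castSucc, Fin.val_cast_of_lt (show k < H + 1 by omega)]
        have hs : ((⟨k, by omega⟩ : Fin H)).succ = (((k+1 : ℕ)) : Fin (H + 1)) := by
          apply Fin.ext
          rw [Fin.val_succ, Fin.val_cast_of_lt (show k + 1 < H + 1 by omega)]
        rw [← hc, ← hs]
        exact hνflow _
      obtain ⟨m, hm, hmfst, hmρ⟩ := glue_step γ' (ν (((k+1 : ℕ)) : Fin (H + 1))) hlink
      haveI := hm
      have hg1 : Measurable fun p : (X × X) × X => (p.1.1, p.2) :=
        (measurable_fst.comp measurable_fst).prodMk measurable_snd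
      have hg : Measurable fun p : (X × X) × X => (p.1.2, p.2) :=
        (measurable_snd.comp measurable_fst).prodMk measurable_snd
      refine ⟨m.map (fun p => (p.1.1, p.2)), Measure.isProbabilityMeasure_map hg1.aemeasurable, ?_, ?_, ?_⟩
      · rw [Measure.map_map measurable_fst hg1]
        have : (Prod.fst ∘ fun p : (X × X) × X => (p.1.1, p.2))
            = (Prod.fst ∘ Prod.fst) := rfl
        rw [this, ← Measure.map_map measurable_fst measurable_fst, hmfst, hfst]
      · rw [Measure.map_map measurable_snd hg1]
        have : (Prod.snd ∘ fun p : (X × X) × X => (p.1.1, p.2))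
            = (Prod.snd ∘ fun p : (X × X) × X => (p.1.2, p.2)) := rfl
        rw [this, ← Measure.map_map measurable_snd hg, hmρ]
      · have hf1 : Measurable fun p : (X × X) × X => (‖p.1.1 - p.1.2‖₊ : ℝ≥0∞) := by fun_prop
        have hf2 : Measurable fun p : (X × X) × X => (‖p.1.2 - p.2‖₊ : ℝ≥0∞) := by fun_prop
        have tri : ∀ p : (X × X) × X,
            (‖p.1.1 - p.2‖₊ : ℝ≥0∞) ≤ (‖p.1.1 - p.1.2‖₊ : ℝ≥0∞) + (‖p.1.2 - p.2‖₊ : ℝ≥0∞) := by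
          intro p
          have h := nnnorm_add_le (p.1.1 - p.1.2) (p.1.2 - p.2)
          rw [sub_add_sub_cancel] at h
          exact_mod_cast h
        calc (∫⁻ p : X × X, (‖p.1 - p.2‖₊ : ℝ≥0∞) ^ 2 ∂(m.map (fun p => (p.1.1, p.2)))) ^ (1/2 : ℝ)
            = (∫⁻ p : (X × X) × X, (‖p.1.1 - p.2‖₊ : ℝ≥0∞) ^ (2:ℝ) ∂m) ^ (1/2 : ℝ) := by
              rw [lintegral_map hint hg1]
              simp_rw [h2]
          _ ≤ (∫⁻ p : (X × X) × X, ((‖p.1.1 - p.1.2‖₊ : ℝ≥0∞) + (‖p.1.2 - p.2‖₊ : ℝ≥0∞)) ^ (2:ℝ)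
                ∂m) ^ (1/2 : ℝ) := by
              gcongr with p
              exact tri p
          _ ≤ (∫⁻ p : (X × X) × X, (‖p.1.1 - p.1.2‖₊ : ℝ≥0∞) ^ (2:ℝ) ∂m) ^ (1/2 : ℝ)
              + (∫⁻ p : (X × X) × X, (‖p.1.2 - p.2‖₊ : ℝ≥0∞) ^ (2:ℝ) ∂m) ^ (1/2 : ℝ) :=
              ENNReal.lintegral_Lp_add_le hf1.aemeasurable hf2.aemeasurable one_le_two
          _ = (∫⁻ q : X × X, (‖q.1 - q.2‖₊ : ℝ≥0∞) ^ 2 ∂γ') ^ (1/2 : ℝ)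
              + (∫⁻ q : X × X, (‖q.1 - q.2‖₊ : ℝ≥0∞) ^ 2 ∂(ν (((k+1 : ℕ)) : Fin (H + 1)))) ^ (1/2 : ℝ) := by
              rw [← hmfst, ← hmρ, lintegral_map hint measurable_fst, lintegral_map hint hg]
              simp_rw [h2]
          _ ≤ (∑ h ∈ Finset.range (k + 1), J h) + J (k + 1) := by
              refine add_le_add hcost' (le_of_eq ?_)
              rw [hJ]
          _ = ∑ h ∈ Finset.range (k + 2), J h := (Finset.sum_range_succ _ _).symm
  obtain ⟨γ', hp, hfst, hsnd, hcost'⟩ := key H le_rfl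
  have hsnd' : γ'.map Prod.snd = μtgt := by
    rw [hsnd, Fin.natCast_eq_last, hνtgt]
  have hW : W2sq μsrc μtgt ≤ 2⁻¹ * ∫⁻ p : X × X, (‖p.1 - p.2‖₊ : ℝ≥0∞) ^ 2 ∂γ' := by
    unfold W2sq
    exact iInf₂_le γ' ⟨hp, hfst, hsnd'⟩
  rw [hcost]
  refine hW.trans ?_
  have hbound : (∫⁻ p : X × X, (‖p.1 - p.2‖₊ : ℝ≥0∞) ^ 2 ∂γ')
      ≤ n * ∑ h : Fin (H + 1), ∫⁻ p : X × X, (‖p.1 - p.2‖₊ : ℝ≥0∞) ^ 2 ∂(ν h) := by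
    have e1 : (∫⁻ p : X × X, (‖p.1 - p.2‖₊ : ℝ≥0∞) ^ 2 ∂γ')
        = ((∫⁻ p : X × X, (‖p.1 - p.2‖₊ : ℝ≥0∞) ^ 2 ∂γ') ^ (1/2 : ℝ)) ^ 2 := by
      rw [← ENNReal.rpow_natCast ((∫⁻ p : X × X, (‖p.1 - p.2‖₊ : ℝ≥0∞) ^ 2 ∂γ') ^ (1/2 : ℝ)) 2,
        ← ENNReal.rpow_mul]
      norm_num
    rw [e1]
    calc ((∫⁻ p : X × X, (‖p.1 - p.2‖₊ : ℝ≥0∞) ^ 2 ∂γ') ^ (1/2 : ℝ)) ^ 2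
        ≤ (∑ h ∈ Finset.range (H + 1), J h) ^ 2 := by gcongr
      _ ≤ ((Finset.range (H + 1)).card : ℝ≥0∞) * ∑ h ∈ Finset.range (H + 1), J h ^ 2 :=
          ennreal_sq_sum_le _ _
      _ = n * ∑ h : Fin (H + 1), ∫⁻ p : X × X, (‖p.1 - p.2‖₊ : ℝ≥0∞) ^ 2 ∂(ν h) := by
          rw [Finset.card_range]
          congr 1
          · rw [hn]; push_cast; ring
          · rw [← Fin.sum_univ_eq_sum_range
              (fun h => J h ^ 2)]
            refine Finset.sum_congr rfl fun i _ => ?_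
            rw [hJ]
            simp only
            rw [← ENNReal.rpow_natCast _ 2, ← ENNReal.rpow_mul]
            norm_num
  calc 2⁻¹ * ∫⁻ p : X × X, (‖p.1 - p.2‖₊ : ℝ≥0∞) ^ 2 ∂γ'
      ≤ 2⁻¹ * (n * ∑ h : Fin (H + 1), ∫⁻ p : X × X, (‖p.1 - p.2‖₊ : ℝ≥0∞) ^ 2 ∂(ν h)) := by
        gcongr
    _ = LPcost H ν := by
        rw [LPcost, div_eq_mul_inv]
        ring
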